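/- arXiv:2603.29920 — 3 statements merged into one kernel-verified Lean document; each statement's English description precedes it below -/
import Mathlib

section
/- Let n be a positive integer and let W be an n×n complex matrix that is normal (W W* = W* W). Suppose every eigenvalue λ of W satisfies either λ = 0 or |1 − λ| < 1. Then for every s₀ ∈ ℂⁿ, the sequence s_m = (I − W)^m s₀ converges as m → ∞, and its limit equals the orthogonal projection of s₀ onto the kernel of W. -/
open Matrix Filter

set_option maxHeartbeats 1000000 in
/-- Sufficiency part of Theorem 3.1 (General discrete IF convergence):
if `W` is normal and every eigenvalue `λ` of `W` satisfies `λ = 0` or `|1 - λ| < 1`,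
then `(I - W)^m s₀` converges to the orthogonal projection of `s₀` onto `ker W`. -/
theorem general_discrete_IF_convergence
    (n : ℕ) (hn : 0 < n) (W : Matrix (Fin n) (Fin n) ℂ)
    (hNormal : W * Wᴴ = Wᴴ * W)
    (hEig : ∀ lam : ℂ, (W - lam • (1 : Matrix (Fin n) (Fin n) ℂ)).det = 0 →
      lam = 0 ∨ ‖1 - lam‖ < 1)
    (s₀ : EuclideanSpace ℂ (Fin n)) :
    Tendsto (fun m : ℕ => Matrix.toEuclideanLin ((1 - W) ^ m) s₀) atTop
      (nhds ((Submodule.orthogonalProjection (LinearMap.ker (Matrix.toEuclideanLin W)) s₀ :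
        EuclideanSpace ℂ (Fin n)))) := by
  classical
  have i0 : Fin n := ⟨0, hn⟩
  haveI : Nontrivial (EuclideanSpace ℂ (Fin n)) := by
    refine ⟨EuclideanSpace.single i0 1, 0, fun h => ?_⟩
    have h2 : (EuclideanSpace.single i0 (1 : ℂ)) i0 = 0 := by rw [h]; rfl
    simp [EuclideanSpace.single_apply] at h2
  set T : EuclideanSpace ℂ (Fin n) →L[ℂ] EuclideanSpace ℂ (Fin n) := Matrix.toEuclideanCLM (𝕜 := ℂ) W with hTdef
  set K : Submodule ℂ (EuclideanSpace ℂ (Fin n)) := LinearMap.ker (Matrix.toEuclideanLin W) with hKdef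
  have hmemK : ∀ x : EuclideanSpace ℂ (Fin n), x ∈ K ↔ T x = 0 := by
    intro x
    rw [hKdef, LinearMap.mem_ker, ← Matrix.coe_toEuclideanCLM_eq_toEuclideanLin]
    rfl
  -- normality of T
  have hTnorm : T * star T = star T * T := by
    rw [hTdef, ← map_star, ← _root_.map_mul, ← _root_.map_mul, Matrix.star_eq_conjTranspose, hNormal]
  -- kernel of T is contained in kernel of star T
  have hker_star : ∀ x : EuclideanSpace ℂ (Fin n), T x = 0 → star T x = 0 := by
    intro x hx
    have h1 : (inner ℂ (star T x) (star T x) : ℂ) = 0 := by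
      rw [ContinuousLinearMap.star_eq_adjoint, ContinuousLinearMap.adjoint_inner_left]
      have h2 : T ((ContinuousLinearMap.adjoint T) x)
          = (ContinuousLinearMap.adjoint T) (T x) := by
        have h3 := congrFun (congrArg DFunLike.coe hTnorm) x
        simpa [ContinuousLinearMap.mul_apply, ContinuousLinearMap.star_eq_adjoint] using h3
      rw [h2, hx, map_zero, inner_zero_right]
    rwa [inner_self_eq_zero] at h1
  -- the orthogonal projection onto K as a CLM on E
  set P : EuclideanSpace ℂ (Fin n) →L[ℂ] EuclideanSpace ℂ (Fin n) := K.subtypeL ∘L Submodule.orthogonalProjection K with hPdef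
  have hPapp : ∀ x : EuclideanSpace ℂ (Fin n), P x = (Submodule.orthogonalProjection K x : EuclideanSpace ℂ (Fin n)) := fun _ => rfl
  have hPmemK : ∀ x : EuclideanSpace ℂ (Fin n), P x ∈ K := fun x => (Submodule.orthogonalProjection K x).2
  have hPmem : ∀ y ∈ K, P y = y := by
    intro y hy
    rw [hPapp]; exact K.starProjection_eq_self_iff.mpr hy
  have hPself : IsSelfAdjoint P := isSelfAdjoint_starProjection K
  have hPP : P * P = P := ContinuousLinearMap.ext fun x => by
    rw [ContinuousLinearMap.mul_apply]; exact hPmem (P x) (hPmemK x)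
  have hTP : T * P = 0 := ContinuousLinearMap.ext fun x => by
    rw [ContinuousLinearMap.mul_apply, ContinuousLinearMap.zero_apply]
    exact (hmemK (P x)).mp (hPmemK x)
  have hT'P : star T * P = 0 := ContinuousLinearMap.ext fun x => by
    rw [ContinuousLinearMap.mul_apply, ContinuousLinearMap.zero_apply]
    exact hker_star (P x) ((hmemK (P x)).mp (hPmemK x))
  have hPT : P * T = 0 := by
    have := congrArg star hT'P
    rw [StarMul.star_mul, star_star, hPself.star_eq] at this; exact this.trans (by rw [ContinuousLinearMap.star_eq_adjoint, map_zero])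
  have hPT' : P * star T = 0 := by
    have := congrArg star hTP
    rw [StarMul.star_mul, hPself.star_eq] at this; exact this.trans (by rw [ContinuousLinearMap.star_eq_adjoint, map_zero])
  set A : EuclideanSpace ℂ (Fin n) →L[ℂ] EuclideanSpace ℂ (Fin n) := 1 - P - T with hAdef
  have hstarA : star A = 1 - P - star T := by
    rw [hAdef]
    simp only [ContinuousLinearMap.star_eq_adjoint, map_sub, ContinuousLinearMap.one_def,
      ContinuousLinearMap.adjoint_id]
    rw [← ContinuousLinearMap.star_eq_adjoint, ← ContinuousLinearMap.star_eq_adjoint,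
      hPself.star_eq]
  have hAP : A * P = 0 := by
    rw [hAdef, sub_mul, sub_mul, one_mul, hPP, hTP, sub_self, zero_sub, neg_zero]
  have hPA : P * A = 0 := by
    rw [hAdef, mul_sub, mul_sub, mul_one, hPP, hPT, sub_self, zero_sub, neg_zero]
  -- star-normality of A
  haveI hAnormal : IsStarNormal A := by
    constructor
    show star A * A = A * star A
    rw [hstarA, hAdef]
    simp only [sub_mul, mul_sub, one_mul, mul_one]
    rw [hPP, hPT, hPT', hTP, hT'P, hTnorm]
    abel
  -- power identity
  have h1T : (1 : EuclideanSpace ℂ (Fin n) →L[ℂ] EuclideanSpace ℂ (Fin n)) - T = A + P := by rw [hAdef]; abel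
  have hpow : ∀ m : ℕ, ((1 : EuclideanSpace ℂ (Fin n) →L[ℂ] EuclideanSpace ℂ (Fin n)) - T) ^ (m + 1) = A ^ (m + 1) + P := by
    intro m
    induction m with
    | zero => simp [h1T]
    | succ m ih =>
      have hAmP : A ^ (m + 1) * P = 0 := by
        rw [pow_succ, mul_assoc, hAP, mul_zero]
      rw [pow_succ, ih, h1T, add_mul, mul_add, mul_add, hPA, hPP, hAmP, ← pow_succ]
      abel
  -- every spectral value of A has modulus < 1
  have hspec : ∀ μ ∈ spectrum ℂ A, ‖μ‖₊ < 1 := by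
    intro μ hμ
    have hexists : ∃ x : EuclideanSpace ℂ (Fin n), x ≠ 0 ∧ A x = μ • x := by
      by_contra hcon
      push_neg at hcon
      refine spectrum.notMem_iff.mpr ?_ hμ
      set L : EuclideanSpace ℂ (Fin n) →L[ℂ] EuclideanSpace ℂ (Fin n) :=
        algebraMap ℂ (EuclideanSpace ℂ (Fin n) →L[ℂ] EuclideanSpace ℂ (Fin n)) μ - A with hLdef
      have hLx : ∀ x, L x = μ • x - A x := by
        intro x
        rw [hLdef]
        simp [ContinuousLinearMap.sub_apply, Algebra.algebraMap_eq_smul_one]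
      have hLinj : Function.Injective L.toLinearMap := by
        rw [← LinearMap.ker_eq_bot, LinearMap.ker_eq_bot']
        intro x hx
        by_contra hx0
        refine hcon x hx0 ?_
        have h4 : μ • x - A x = 0 := by rw [← hLx]; exact hx
        exact (sub_eq_zero.mp h4).symm
      have hLsurj : Function.Surjective L.toLinearMap :=
        LinearMap.injective_iff_surjective.mp hLinj
      set e := LinearEquiv.ofBijective L.toLinearMap ⟨hLinj, hLsurj⟩ with hedef
      have hcoe : ((ContinuousLinearEquiv.toUnit e.toContinuousLinearEquiv :
          (EuclideanSpace ℂ (Fin n) →L[ℂ] EuclideanSpace ℂ (Fin n))ˣ) :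
          EuclideanSpace ℂ (Fin n) →L[ℂ] EuclideanSpace ℂ (Fin n)) = L := by
        ext x
        rfl
      exact ⟨ContinuousLinearEquiv.toUnit e.toContinuousLinearEquiv, hcoe⟩
    obtain ⟨x, hx0, hAx⟩ := hexists
    have hPx : μ • P x = 0 := by
      have h1 : P (A x) = P (μ • x) := congrArg P hAx
      have h2 : P (A x) = 0 := by
        have := congrFun (congrArg DFunLike.coe hPA) x
        simpa [ContinuousLinearMap.mul_apply] using this
      rw [h2, _root_.map_smul] at h1
      exact h1.symm
    rcases eq_or_ne μ 0 with h0 | hμ0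
    · simp [h0]
    · have hPx0 : P x = 0 := by
        rcases smul_eq_zero.mp hPx with h | h
        · exact absurd h hμ0
        · exact h
      have hAx' : x - T x = μ • x := by
        have : A x = x - P x - T x := by
          simp [hAdef, ContinuousLinearMap.sub_apply]
        rw [this, hPx0, sub_zero] at hAx
        exact hAx
      have hTx : T x = (1 - μ) • x := by
        rw [sub_smul, one_smul]
        rw [eq_sub_iff_add_eq, ← eq_sub_iff_add_eq']
        exact hAx'.symm
      have hdet : (W - (1 - μ) • (1 : Matrix (Fin n) (Fin n) ℂ)).det = 0 := by
        rw [← Matrix.exists_mulVec_eq_zero_iff]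
        refine ⟨WithLp.equiv 2 (Fin n → ℂ) x, ?_, ?_⟩
        · intro h
          exact hx0 ((WithLp.equiv 2 (Fin n → ℂ)).injective (h.trans (by simp)))
        · have hmv : W.mulVec (WithLp.equiv 2 (Fin n → ℂ) x)
              = (1 - μ) • (WithLp.equiv 2 (Fin n → ℂ) x) := by
            have h5 := Matrix.ofLp_toEuclideanCLM (𝕜 := ℂ) W x
            rw [← hTdef, hTx] at h5
            exact h5.symm
          rw [Matrix.sub_mulVec, hmv, Matrix.smul_mulVec, Matrix.one_mulVec, sub_self]
      rcases hEig (1 - μ) hdet with hc | hc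
      · exfalso
        have hTx0 : T x = 0 := by rw [hTx, hc, zero_smul]
        have hx' : P x = x := hPmem x ((hmemK x).mpr hTx0)
        exact hx0 (by rw [← hx', hPx0])
      · have habs : ‖μ‖ < 1 := by simpa using hc
        have hnorm : ‖μ‖ < 1 := by exact habs
        exact_mod_cast hnorm
  -- spectral radius and norm of A
  have hs1 : spectralRadius ℂ A < 1 :=
    spectrum.spectralRadius_lt_of_forall_lt_of_nonempty (spectrum.nonempty A) hspec
  have hAnorm : ‖A‖ < 1 := by
    rw [IsStarNormal.spectralRadius_eq_nnnorm A] at hs1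
    have : ‖A‖₊ < 1 := by exact_mod_cast hs1
    exact_mod_cast this
  -- convergence
  have h3 : Tendsto (fun m : ℕ => A ^ m) atTop (nhds 0) :=
    tendsto_pow_atTop_nhds_zero_of_norm_lt_one hAnorm
  have h4 : Tendsto (fun m : ℕ => (A ^ m) s₀ + P s₀) atTop (nhds (P s₀)) := by
    have h5 : Tendsto (fun m : ℕ => (A ^ m) s₀) atTop (nhds 0) := by
      have h6 := ((ContinuousLinearMap.apply ℂ (EuclideanSpace ℂ (Fin n)) s₀).continuous.tendsto 0).comp h3
      simpa only [Function.comp_def, ContinuousLinearMap.apply_apply, map_zero, ContinuousLinearMap.zero_apply] using h6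
    have h7 := h5.add_const (P s₀)
    simpa using h7
  have hkey : ∀ m : ℕ, Matrix.toEuclideanLin ((1 - W) ^ (m + 1)) s₀
      = (A ^ (m + 1)) s₀ + P s₀ := by
    intro m
    have h8 : Matrix.toEuclideanCLM (𝕜 := ℂ) ((1 - W) ^ (m + 1)) = ((1 : EuclideanSpace ℂ (Fin n) →L[ℂ] EuclideanSpace ℂ (Fin n)) - T) ^ (m + 1) := by
      rw [_root_.map_pow, _root_.map_sub, _root_.map_one, hTdef]
    have h9 : Matrix.toEuclideanLin ((1 - W) ^ (m + 1)) s₀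
        = (Matrix.toEuclideanCLM (𝕜 := ℂ) ((1 - W) ^ (m + 1))) s₀ := rfl
    rw [h9, h8, hpow m, ContinuousLinearMap.add_apply]
  have hfinal : Tendsto (fun m : ℕ => Matrix.toEuclideanLin ((1 - W) ^ m) s₀) atTop (nhds (P s₀)) := by
    refine h4.congr' ?_
    filter_upwards [eventually_ge_atTop 1] with m hm
    obtain ⟨k, rfl⟩ := Nat.exists_eq_add_of_le hm
    rw [add_comm 1 k]
    exact (hkey k).symm
  exact hfinal
end

section
/- Let n be a positive integer and let W be an n×n complex normal matrix (W W* = W* W) all of whose eigenvalues λ satisfy λ = 0 or |1 − λ| < 1. For any s₀ ∈ ℂⁿ, the limit s_∞ of the sequence s_m = (I − W)^m s₀ satisfies W s_∞ = 0, i.e., the limit of the sifting process lies in the kernel of W. -/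
open Matrix Filter
open scoped ComplexInnerProductSpace


lemma clm_spectrum_exists_eigenvector {n : ℕ}
    (S : EuclideanSpace ℂ (Fin n) →L[ℂ] EuclideanSpace ℂ (Fin n)) {μ : ℂ}
    (hμ : μ ∈ spectrum ℂ S) : ∃ v, v ≠ 0 ∧ S v = μ • v := by
  by_contra h
  push_neg at h
  rw [spectrum.mem_iff] at hμ
  apply hμ
  set L : EuclideanSpace ℂ (Fin n) →L[ℂ] EuclideanSpace ℂ (Fin n) :=
    algebraMap ℂ _ μ - S with hL
  have hLapp : ∀ x, L x = μ • x - S x := by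
    intro x
    simp [hL, Algebra.algebraMap_eq_smul_one]
  have hinj : Function.Injective (L : EuclideanSpace ℂ (Fin n) →ₗ[ℂ] EuclideanSpace ℂ (Fin n)) := by
    rw [← LinearMap.ker_eq_bot, LinearMap.ker_eq_bot']
    intro x hx
    by_contra hx0
    apply h x hx0
    have h2 : L x = 0 := hx
    rw [hLapp x] at h2
    linear_combination (norm := module) -h2
  have hbij : Function.Bijective (L : EuclideanSpace ℂ (Fin n) →ₗ[ℂ] EuclideanSpace ℂ (Fin n)) :=
    ⟨hinj, (LinearMap.injective_iff_surjective).mp hinj⟩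
  let e := LinearEquiv.ofBijective _ hbij
  refine ⟨⟨L, LinearMap.toContinuousLinearMap (e.symm : _ →ₗ[ℂ] _), ?_, ?_⟩, rfl⟩
  · refine ContinuousLinearMap.ext fun x => ?_
    show L (e.symm x) = x
    exact e.apply_symm_apply x
  · refine ContinuousLinearMap.ext fun x => ?_
    show e.symm (L x) = x
    exact e.symm_apply_apply x

set_option maxHeartbeats 2000000 in
/-- The limit of the sifting process lies in the kernel of `W`: under the hypotheses of
Theorem 3.1, for every `s₀` the sequence `(I - W)^m s₀` converges to some `s_∞`
with `W s_∞ = 0`. -/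
theorem sifting_limit_in_kernel
    (n : ℕ) (hn : 0 < n) (W : Matrix (Fin n) (Fin n) ℂ)
    (hNormal : W * Wᴴ = Wᴴ * W)
    (hEig : ∀ lam : ℂ, (W - lam • (1 : Matrix (Fin n) (Fin n) ℂ)).det = 0 →
      lam = 0 ∨ ‖1 - lam‖ < 1)
    (s₀ : EuclideanSpace ℂ (Fin n)) :
    ∃ sInf : EuclideanSpace ℂ (Fin n),
      Tendsto (fun m : ℕ => Matrix.toEuclideanLin ((1 - W) ^ m) s₀) atTop (nhds sInf) ∧
      Matrix.toEuclideanLin W sInf = 0 := by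
  haveI : Nonempty (Fin n) := ⟨⟨0, hn⟩⟩
  set T : EuclideanSpace ℂ (Fin n) →L[ℂ] EuclideanSpace ℂ (Fin n) := Matrix.toEuclideanCLM (𝕜 := ℂ) W with hT
  have hN : T * star T = star T * T := by
    rw [hT, ← map_star, ← _root_.map_mul, ← _root_.map_mul, Matrix.star_eq_conjTranspose, hNormal]
  set K : Submodule ℂ (EuclideanSpace ℂ (Fin n)) := LinearMap.ker (T : EuclideanSpace ℂ (Fin n) →ₗ[ℂ] EuclideanSpace ℂ (Fin n)) with hK
  set P : EuclideanSpace ℂ (Fin n) →L[ℂ] EuclideanSpace ℂ (Fin n) := K.subtypeL ∘L K.orthogonalProjectionOnto with hP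
  have hPmem : ∀ x, P x ∈ K := fun x => (K.orthogonalProjectionOnto x).2
  have hPK : ∀ x ∈ K, P x = x := by
    intro x hx
    exact Submodule.starProjection_eq_self_iff.mpr hx
  have hPperp : ∀ x ∈ Kᗮ, P x = 0 := by
    intro x hx
    simp [hP, Submodule.orthogonalProjectionOnto_apply_of_mem_orthogonal hx]
  have hTker : ∀ x ∈ K, T x = 0 := fun x hx => hx
  -- kernel of star T equals kernel of T
  have hstarker : ∀ x ∈ K, star T x = 0 := by
    intro x hx
    have key : (inner ℂ (star T x) (star T x) : ℂ) = inner ℂ (T x) (T x) := by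
      rw [ContinuousLinearMap.star_eq_adjoint, ContinuousLinearMap.adjoint_inner_left,
        ← ContinuousLinearMap.comp_apply, ← ContinuousLinearMap.mul_def,
        ← ContinuousLinearMap.star_eq_adjoint, hN, ContinuousLinearMap.mul_def,
        ContinuousLinearMap.comp_apply, ContinuousLinearMap.star_eq_adjoint,
        ContinuousLinearMap.adjoint_inner_right]
    rw [hTker x hx, inner_zero_left] at key
    exact inner_self_eq_zero.mp key
  have hrange : ∀ x, T x ∈ Kᗮ := by
    intro x
    rw [Submodule.mem_orthogonal]
    intro y hy
    rw [← ContinuousLinearMap.adjoint_inner_left, ← ContinuousLinearMap.star_eq_adjoint,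
      hstarker y hy, inner_zero_left]
  have hrange' : ∀ x, star T x ∈ Kᗮ := by
    intro x
    rw [Submodule.mem_orthogonal]
    intro y hy
    rw [ContinuousLinearMap.star_eq_adjoint, ContinuousLinearMap.adjoint_inner_right,
      hTker y hy, inner_zero_left]
  -- operator identities
  have hTP : T * P = 0 := ContinuousLinearMap.ext fun x => hTker _ (hPmem x)
  have hPT : P * T = 0 := ContinuousLinearMap.ext fun x => hPperp _ (hrange x)
  have hT'P : star T * P = 0 := ContinuousLinearMap.ext fun x => hstarker _ (hPmem x)
  have hPT' : P * star T = 0 := ContinuousLinearMap.ext fun x => hPperp _ (hrange' x)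
  have hPP : P * P = P := ContinuousLinearMap.ext fun x => hPK _ (hPmem x)
  have hPstar : star P = P := (isSelfAdjoint_starProjection K)
  set S : EuclideanSpace ℂ (Fin n) →L[ℂ] EuclideanSpace ℂ (Fin n) := 1 - T - P with hS
  have hSstar : star S = 1 - star T - P := by
    rw [hS, star_sub (1 - T) P, star_sub 1 T, star_one, hPstar]
  haveI hSnormal : IsStarNormal S := by
    constructor
    have h1 : star S * S = 1 - T - star T - P + star T * T := by
      rw [hSstar, hS]
      simp only [sub_mul, mul_sub, one_mul, mul_one, hT'P, hPT, hPP]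
      abel
    have h2 : S * star S = 1 - T - star T - P + T * star T := by
      rw [hSstar, hS]
      simp only [sub_mul, mul_sub, one_mul, mul_one, hPT', hTP, hPP]
      abel
    rw [Commute, SemiconjBy, h1, h2, hN]
  -- eigenvalues of S lie in the open unit disc
  have hdisj : ∀ x, x ∈ K → x ∈ Kᗮ → x = 0 := by
    intro x hx hx'
    have := ((Submodule.mem_orthogonal K x).mp hx') x hx
    exact inner_self_eq_zero.mp this
  have hbound : ∀ μ ∈ spectrum ℂ S, ‖μ‖₊ < 1 := by
    intro μ hμ
    obtain ⟨v, hv0, hv⟩ := clm_spectrum_exists_eigenvector S hμ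
    -- decompose v
    have hvsplit : v = P v + (v - P v) := by abel
    have hq : v - P v ∈ Kᗮ := Submodule.sub_starProjection_mem_orthogonal (K := K) v
    have hSp : S (P v) = 0 := by
      simp only [hS, ContinuousLinearMap.sub_apply, ContinuousLinearMap.one_apply]
      rw [hTker _ (hPmem v), hPK _ (hPmem v)]
      abel
    have hSq : S (v - P v) = (v - P v) - T (v - P v) := by
      simp only [hS, ContinuousLinearMap.sub_apply, ContinuousLinearMap.one_apply]
      rw [hPperp _ hq]
      abel
    have hSv : S v = (v - P v) - T (v - P v) := by
      conv_lhs => rw [hvsplit]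
      rw [map_add, hSp, hSq, zero_add]
    have hμp : μ • P v = 0 := by
      have hmemK : μ • P v ∈ K := K.smul_mem μ (hPmem v)
      have hmemKp : μ • P v ∈ Kᗮ := by
        have h1 : μ • P v = ((v - P v) - T (v - P v)) - μ • (v - P v) := by
          rw [← hSv, hv]
          module
        rw [h1]
        exact Kᗮ.sub_mem (Kᗮ.sub_mem hq (hrange _)) (Kᗮ.smul_mem μ hq)
      exact hdisj _ hmemK hmemKp
    rcases eq_or_ne μ 0 with rfl | hμ0
    · simp
    · have hp0 : P v = 0 := by
        rcases smul_eq_zero.mp hμp with h | h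
        · exact absurd h hμ0
        · exact h
      have hvq : v ∈ Kᗮ := by rw [show v = v - P v by rw [hp0]; abel]; exact hq
      have hTv : T v = (1 - μ) • v := by
        have := hSv
        rw [hv, hp0] at this
        simp only [sub_zero] at this
        linear_combination (norm := module) this
      have hlam0 : (1 - μ) ≠ 0 := by
        intro h
        rw [h, zero_smul] at hTv
        exact hv0 (hdisj v hTv hvq)
      have hdet : (W - (1 - μ) • (1 : Matrix (Fin n) (Fin n) ℂ)).det = 0 := by
        rw [← Matrix.exists_mulVec_eq_zero_iff]
        refine ⟨WithLp.equiv _ _ v, ?_, ?_⟩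
        · simpa using hv0
        · have happ : Matrix.toEuclideanCLM (𝕜 := ℂ)
              (W - (1 - μ) • (1 : Matrix (Fin n) (Fin n) ℂ)) v = 0 := by
            rw [map_sub, _root_.map_smul, _root_.map_one]
            simp only [ContinuousLinearMap.sub_apply, ContinuousLinearMap.smul_apply,
              ContinuousLinearMap.one_apply]
            rw [← hT, hTv]
            abel
          calc (W - (1 - μ) • (1 : Matrix (Fin n) (Fin n) ℂ)) *ᵥ (WithLp.equiv _ _ v)
              = Matrix.toLin' (W - (1 - μ) • (1 : Matrix (Fin n) (Fin n) ℂ))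
                  (WithLp.equiv _ _ v) := (Matrix.toLin'_apply _ _).symm
            _ = WithLp.equiv _ _ (Matrix.toEuclideanCLM (𝕜 := ℂ)
                  (W - (1 - μ) • (1 : Matrix (Fin n) (Fin n) ℂ)) v) :=
                (Matrix.ofLp_toEuclideanCLM _ _).symm
            _ = 0 := by rw [happ]; rfl
      rcases hEig _ hdet with h | h
      · exact absurd h hlam0
      · have : ‖μ‖ < 1 := by simpa using h
        simpa [← NNReal.coe_lt_coe, nnnorm] using this
  -- the operator norm of S is < 1
  haveI : Nontrivial (EuclideanSpace ℂ (Fin n)) := inferInstance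
  haveI : Nontrivial (EuclideanSpace ℂ (Fin n) →L[ℂ] EuclideanSpace ℂ (Fin n)) := by
    obtain ⟨x, y, hxy⟩ := exists_pair_ne (EuclideanSpace ℂ (Fin n))
    refine ⟨1, 0, fun h => hxy ?_⟩
    have hx := congrFun (congrArg DFunLike.coe h) x
    have hy := congrFun (congrArg DFunLike.coe h) y
    simp only [ContinuousLinearMap.one_apply, ContinuousLinearMap.zero_apply] at hx hy
    rw [hx, hy]
  have hSnorm : ‖S‖ < 1 := by
    have hrad : spectralRadius ℂ S = (‖S‖₊ : ENNReal) := IsStarNormal.spectralRadius_eq_nnnorm S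
    obtain ⟨μ₀, hμ₀mem, hμ₀max⟩ := (spectrum.isCompact (𝕜 := ℂ) S).exists_isMaxOn
      (spectrum.nonempty S) (continuous_nnnorm.continuousOn)
    have hle : spectralRadius ℂ S ≤ (‖μ₀‖₊ : ENNReal) := by
      rw [spectralRadius]
      exact iSup₂_le fun k hk => ENNReal.coe_le_coe.mpr (hμ₀max hk)
    rw [hrad] at hle
    have h1 : ‖S‖₊ < 1 := lt_of_le_of_lt (ENNReal.coe_le_coe.mp hle) (hbound μ₀ hμ₀mem)
    exact_mod_cast h1
  -- decomposition of the iterates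
  set q : EuclideanSpace ℂ (Fin n) := s₀ - P s₀ with hq
  have hqmem : q ∈ Kᗮ := Submodule.sub_starProjection_mem_orthogonal (K := K) s₀
  have hstep : ∀ x ∈ Kᗮ, S x = x - T x ∧ x - T x ∈ Kᗮ := by
    intro x hx
    constructor
    · simp only [hS, ContinuousLinearMap.sub_apply, ContinuousLinearMap.one_apply]
      rw [hPperp _ hx]
      abel
    · exact Kᗮ.sub_mem hx (hrange x)
  have hiter : ∀ m : ℕ, ((1 - T) ^ m) s₀ = P s₀ + (S ^ m) q ∧ (S ^ m) q ∈ Kᗮ := by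
    intro m
    induction m with
    | zero =>
      refine ⟨?_, by simpa using hqmem⟩
      simp only [pow_zero, ContinuousLinearMap.one_apply, hq]
      abel
    | succ m ih =>
      obtain ⟨ih1, ih2⟩ := ih
      obtain ⟨hs1, hs2⟩ := hstep _ ih2
      have e1 : ((1 - T) ^ (m + 1)) s₀ = (1 - T) (((1 - T) ^ m) s₀) := by
        rw [pow_succ']
        rfl
      have e2 : (S ^ (m + 1)) q = S ((S ^ m) q) := by
        rw [pow_succ']
        rfl
      constructor
      · rw [e1, ih1, map_add, e2, hs1]
        have : (1 - T) (P s₀) = P s₀ := by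
          simp only [ContinuousLinearMap.sub_apply, ContinuousLinearMap.one_apply]
          rw [hTker _ (hPmem s₀)]
          abel
        rw [this]
        simp only [ContinuousLinearMap.sub_apply, ContinuousLinearMap.one_apply]
      · rw [e2, hs1]
        exact hs2
  -- convergence
  have hconv : Tendsto (fun m : ℕ => (S ^ m) q) atTop (nhds 0) := by
    rw [tendsto_zero_iff_norm_tendsto_zero]
    have hg : Tendsto (fun m : ℕ => ‖S‖ ^ m * ‖q‖) atTop (nhds 0) := by
      have := (tendsto_pow_atTop_nhds_zero_of_lt_one (norm_nonneg S) hSnorm).mul_const ‖q‖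
      simpa using this
    refine squeeze_zero' (Eventually.of_forall fun m => norm_nonneg _) ?_ hg
    filter_upwards [eventually_ge_atTop 1] with m hm
    calc ‖(S ^ m) q‖ ≤ ‖S ^ m‖ * ‖q‖ := (S ^ m).le_opNorm q
      _ ≤ ‖S‖ ^ m * ‖q‖ :=
        mul_le_mul_of_nonneg_right (norm_pow_le' S hm) (norm_nonneg q)
  have hrepr : ∀ m : ℕ, Matrix.toEuclideanLin ((1 - W) ^ m) s₀ = P s₀ + (S ^ m) q := by
    intro m
    have hcl : Matrix.toEuclideanCLM (𝕜 := ℂ) ((1 - W) ^ m) = (1 - T) ^ m := by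
      rw [map_pow, map_sub, _root_.map_one, hT]
    calc Matrix.toEuclideanLin ((1 - W) ^ m) s₀
        = Matrix.toEuclideanCLM (𝕜 := ℂ) ((1 - W) ^ m) s₀ := by
          rw [← Matrix.coe_toEuclideanCLM_eq_toEuclideanLin]
          rfl
      _ = ((1 - T) ^ m) s₀ := by rw [hcl]
      _ = P s₀ + (S ^ m) q := (hiter m).1
  refine ⟨P s₀, ?_, ?_⟩
  · simp only [hrepr]
    have := tendsto_const_nhds (x := P s₀) (f := atTop (α := ℕ)) |>.add hconv
    simpa using this
  · have : Matrix.toEuclideanLin W (P s₀) = T (P s₀) := by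
      rw [hT, ← Matrix.coe_toEuclideanCLM_eq_toEuclideanLin]
      rfl
    rw [this]
    exact hTker _ (hPmem s₀)
end

section
/- Let n be a positive integer and let B be an n×n real matrix that is symmetric, has all entries nonnegative, and has each row summing to 1 (i.e., B is symmetric and row-stochastic). Set W = B·B. Then for every s₀ ∈ ℝⁿ, the sequence s_m = (I − W)^m s₀ converges as m → ∞ to the orthogonal projection of s₀ onto the kernel of W. -/
open Matrix Filter Finset

local notation "⟪" x ", " y "⟫" => @inner ℝ _ _ x y

lemma toEuclideanLin_pow {n : ℕ} (M : Matrix (Fin n) (Fin n) ℝ) (m : ℕ) :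
    Matrix.toEuclideanLin (M ^ m) = (Matrix.toEuclideanLin M) ^ m := by
  induction m with
  | zero =>
      simp only [pow_zero, Matrix.toEuclideanLin_eq_toLin, Matrix.toLin_one]
      rfl
  | succ k ih =>
      rw [pow_succ, pow_succ, Matrix.toEuclideanLin_eq_toLin,
        Matrix.toLin_mul _ (PiLp.basisFun 2 ℝ (Fin n)) _,
        ← Matrix.toEuclideanLin_eq_toLin, ih]
      rfl

/-- Theorem 5.1 (DB-IF convergence): if `B` is symmetric and row-stochastic and
`W = B·B`, then `(I - W)^m s₀` converges to the orthogonal projection of `s₀`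
onto `ker W`. -/
theorem DB_IF_convergence
    (n : ℕ) (hn : 0 < n) (B : Matrix (Fin n) (Fin n) ℝ)
    (hSym : Bᵀ = B) (hNonneg : ∀ i j, 0 ≤ B i j) (hRow : ∀ i, ∑ j, B i j = 1)
    (s₀ : EuclideanSpace ℝ (Fin n)) :
    Tendsto (fun m : ℕ => Matrix.toEuclideanLin ((1 - B * B) ^ m) s₀) atTop
      (nhds ((Submodule.orthogonalProjectionOnto (LinearMap.ker (Matrix.toEuclideanLin (B * B))) s₀ :
        EuclideanSpace ℝ (Fin n)))) := by
  classical
  have hBh : B.IsHermitian := by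
    rw [Matrix.IsHermitian, Matrix.conjTranspose_eq_transpose_of_trivial, hSym]
  have hWh : (B * B).IsHermitian := by
    rw [Matrix.IsHermitian, Matrix.conjTranspose_mul, hBh.eq]
  set A : EuclideanSpace ℝ (Fin n) →ₗ[ℝ] EuclideanSpace ℝ (Fin n) := Matrix.toEuclideanLin B with hA
  set T : EuclideanSpace ℝ (Fin n) →ₗ[ℝ] EuclideanSpace ℝ (Fin n) := Matrix.toEuclideanLin (B * B) with hT
  have hAsym : A.IsSymmetric := (Matrix.isHermitian_iff_isSymmetric).mp hBh
  have hTsym : T.IsSymmetric := (Matrix.isHermitian_iff_isSymmetric).mp hWh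
  have hTA : ∀ x, T x = A (A x) := by
    intro x
    rw [hT, hA, Matrix.toEuclideanLin_eq_toLin, Matrix.toLin_mul _ (PiLp.basisFun 2 ℝ (Fin n)) _]
    rfl
  -- norm bound
  have hAnorm : ∀ x : EuclideanSpace ℝ (Fin n), ‖A x‖ ≤ ‖x‖ := by
    intro x
    have key : ∑ i, (A x i) ^ 2 ≤ ∑ i, (x i) ^ 2 := by
      have h1 : ∀ i, (A x i) ^ 2 ≤ ∑ j, B i j * (x j) ^ 2 := by
        intro i
        have hAxi : A x i = ∑ j, B i j * x j := by
          simp [hA, Matrix.toEuclideanLin_apply, Matrix.mulVec, dotProduct]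
        rw [hAxi]
        calc (∑ j, B i j * x j) ^ 2
            ≤ (∑ j, B i j) * ∑ j, B i j * (x j) ^ 2 := by
              refine Finset.sum_sq_le_sum_mul_sum_of_sq_eq_mul _
                (fun j _ => hNonneg i j) (fun j _ => mul_nonneg (hNonneg i j) (sq_nonneg _))
                (fun j _ => by ring)
          _ = ∑ j, B i j * (x j) ^ 2 := by rw [hRow i, one_mul]
      calc ∑ i, (A x i) ^ 2 ≤ ∑ i, ∑ j, B i j * (x j) ^ 2 :=
            Finset.sum_le_sum fun i _ => h1 i
        _ = ∑ j, (∑ i, B i j) * (x j) ^ 2 := by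
            rw [Finset.sum_comm]; simp [Finset.sum_mul]
        _ = ∑ j, (x j) ^ 2 := by
            refine Finset.sum_congr rfl fun j _ => ?_
            have hji : ∀ i, B i j = B j i := fun i => congrFun (congrFun hSym j) i
            simp_rw [hji]
            rw [hRow j, one_mul]
    rw [EuclideanSpace.norm_eq, EuclideanSpace.norm_eq]
    apply Real.sqrt_le_sqrt
    simpa [Real.norm_eq_abs, sq_abs] using key
  -- eigendecomposition
  have hfin : Module.finrank ℝ (EuclideanSpace ℝ (Fin n)) = n :=
    finrank_euclideanSpace_fin
  set v := hTsym.eigenvectorBasis hfin with hv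
  set μ := hTsym.eigenvalues hfin with hμ
  have happ : ∀ i, T (v i) = μ i • v i := by
    intro i
    have h := hTsym.apply_eigenvectorBasis hfin i
    rwa [RCLike.real_smul_eq_coe_smul (K := ℝ)] 
  have hnorm_v : ∀ i, ‖v i‖ = 1 := fun i => v.orthonormal.1 i
  have hμval : ∀ i, μ i = ‖A (v i)‖ ^ 2 := by
    intro i
    have h1 : ⟪T (v i), v i⟫ = μ i := by
      rw [happ i, real_inner_smul_left, real_inner_self_eq_norm_sq, hnorm_v i]
      ring
    have h2 : ⟪T (v i), v i⟫ = ‖A (v i)‖ ^ 2 := by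
      rw [hTA, ← real_inner_self_eq_norm_sq]
      exact hAsym (A (v i)) (v i)
    rw [← h1, h2]
  have hμ0 : ∀ i, 0 ≤ μ i := fun i => (hμval i).symm ▸ sq_nonneg _
  have hμ1 : ∀ i, μ i ≤ 1 := by
    intro i
    rw [hμval i]
    calc ‖A (v i)‖ ^ 2 ≤ ‖v i‖ ^ 2 := by
          have := hAnorm (v i)
          exact pow_le_pow_left₀ (norm_nonneg _) this 2
      _ = 1 := by rw [hnorm_v i]; norm_num
  set c : Fin n → ℝ := fun i => ⟪v i, s₀⟫ with hc
  have hs₀ : s₀ = ∑ i, c i • v i := (v.sum_repr' s₀).symm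
  -- action of (1 - T)^m on eigenvectors
  have hpowv : ∀ (m : ℕ) (i : Fin n), ((1 - T) ^ m) (v i) = (1 - μ i) ^ m • v i := by
    intro m i
    induction m with
    | zero => simp
    | succ k ih =>
        rw [pow_succ', Module.End.mul_apply, ih, LinearMap.map_smul, LinearMap.sub_apply,
          Module.End.one_apply, happ i,
          show v i - μ i • v i = (1 - μ i) • v i by rw [sub_smul, one_smul],
          smul_smul, ← pow_succ]
  have hterm : ∀ m : ℕ, ((1 - T) ^ m) s₀ = ∑ i, ((1 - μ i) ^ m * c i) • v i := by
    intro m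
    rw [hs₀, map_sum]
    refine Finset.sum_congr rfl fun i _ => ?_
    rw [LinearMap.map_smul, hpowv m i, smul_smul, mul_comm]
  set L : EuclideanSpace ℝ (Fin n) := ∑ i, (if μ i = 0 then c i else 0) • v i with hL
  -- convergence
  have hconv : Tendsto (fun m : ℕ => ((1 - T) ^ m) s₀) atTop (nhds L) := by
    simp only [hterm, hL]
    refine tendsto_finset_sum _ fun i _ => ?_
    by_cases h0 : μ i = 0
    · simp only [h0, if_pos, sub_zero, one_pow, one_mul]
      exact tendsto_const_nhds
    · rw [if_neg h0]
      have habs : |1 - μ i| < 1 := by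
        rw [abs_lt]
        constructor
        · linarith [hμ1 i]
        · have := lt_of_le_of_ne (hμ0 i) (Ne.symm h0)
          linarith
      have h1 : Tendsto (fun m : ℕ => (1 - μ i) ^ m * c i) atTop (nhds 0) := by
        simpa using (tendsto_pow_atTop_nhds_zero_of_abs_lt_one habs).mul_const (c i)
      simpa using h1.smul_const (v i)
  -- L is the orthogonal projection
  have hmemK : L ∈ LinearMap.ker T := by
    rw [LinearMap.mem_ker, hL, map_sum]
    refine Finset.sum_eq_zero fun i _ => ?_
    by_cases h0 : μ i = 0
    · rw [LinearMap.map_smul, happ i, h0, zero_smul, smul_zero]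
    · rw [if_neg h0, zero_smul, map_zero]
  have hortho : s₀ - L ∈ (LinearMap.ker T)ᗮ := by
    have hdiff : s₀ - L = ∑ i, (if μ i = 0 then 0 else c i) • v i := by
      rw [hs₀, hL, ← Finset.sum_sub_distrib]
      refine Finset.sum_congr rfl fun i _ => ?_
      rw [← sub_smul]
      by_cases h0 : μ i = 0 <;> simp [h0]
    rw [hdiff]
    refine Submodule.sum_mem _ fun i _ => ?_
    by_cases h0 : μ i = 0
    · simp [h0]
    · rw [if_neg h0]
      refine Submodule.smul_mem _ _ ?_
      rw [Submodule.mem_orthogonal]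
      intro u hu
      have hTu : T u = 0 := LinearMap.mem_ker.mp hu
      have : μ i * ⟪u, v i⟫ = 0 := by
        calc μ i * ⟪u, v i⟫ = ⟪u, μ i • v i⟫ := by rw [real_inner_smul_right]
          _ = ⟪u, T (v i)⟫ := by rw [happ i]
          _ = ⟪T u, v i⟫ := (hTsym u (v i)).symm
          _ = 0 := by rw [hTu, inner_zero_left]
      exact (mul_eq_zero.mp this).resolve_left h0
  have hproj : (Submodule.orthogonalProjectionOnto (LinearMap.ker T) s₀ : EuclideanSpace ℝ (Fin n)) = L :=
    Submodule.eq_starProjection_of_mem_orthogonal hmemK hortho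
  -- conclude
  have hmap1 : Matrix.toEuclideanLin (1 - B * B) = 1 - T := by
    rw [map_sub, hT]
    congr 1
    rw [Matrix.toEuclideanLin_eq_toLin, Matrix.toLin_one]
    rfl
  have hfun : (fun m : ℕ => Matrix.toEuclideanLin ((1 - B * B) ^ m) s₀)
      = fun m : ℕ => ((1 - T) ^ m) s₀ := by
    funext m
    rw [toEuclideanLin_pow, hmap1]
  rw [hfun, hproj]
  exact hconv
end
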